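/- Let τ > 0, let X be a separable reflexive real Banach space such that X and its dual X* are strictly convex, and U a real separable Hilbert space; let B : U → X be a bounded linear operator and R(t,s) ∈ L(X) (0 ≤ s ≤ t ≤ τ) a strongly continuous, uniformly bounded family. Let J : X → X* be a duality mapping, and assume the norm of X satisfies, for all x, z ∈ X, the Gateaux differentiability property lim_{ε→0} (‖x+εz‖² − ‖x‖²)/(2ε) = ⟨J(x), z⟩. Fix λ > 0 and x₀, d ∈ X. If u* ∈ L²([0,τ];U) minimizes the cost functional G_λ(u) = ‖R(τ,0)x₀ + ∫₀^τ R(τ,s)Bu(s)ds − d‖²_X + λ∫₀^τ ‖u(t)‖²_U dt, and x*(τ) = R(τ,0)x₀ + ∫₀^τ R(τ,s)Bu*(s)ds, then u*(t) = −(1/λ)·B*R(τ,t)*J(x*(τ) − d) for almost every t ∈ [0,τ]. -/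

import Mathlib

open MeasureTheory
open scoped RealInnerProductSpace

/-- if `u*` minimizes
`G_λ(u) = ‖R(τ,0)x₀ + ∫₀^τ R(τ,s)Bu(s)ds − d‖² + λ∫₀^τ‖u(t)‖²dt`, then
`u*(t) = −(1/λ)·B*R(τ,t)*J(x*(τ) − d)` for a.e. `t ∈ [0,τ]`. -/
theorem stmt_6_aux
    {X U : Type*} [NormedAddCommGroup X] [NormedSpace ℝ X] [CompleteSpace X]
    [NormedAddCommGroup U] [InnerProductSpace ℝ U] [CompleteSpace U]
    [TopologicalSpace.SeparableSpace U]
    (τ : ℝ) (hτ : 0 < τ)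
    (B : U →L[ℝ] X)
    (R : ℝ → ℝ → X →L[ℝ] X)
    (hR_strong : ∀ x : X, ContinuousOn (fun p : ℝ × ℝ => R p.1 p.2 x)
      {p : ℝ × ℝ | 0 ≤ p.2 ∧ p.2 ≤ p.1 ∧ p.1 ≤ τ})
    (MR : ℝ) (hMR : ∀ t s : ℝ, 0 ≤ s → s ≤ t → t ≤ τ → ‖R t s‖ ≤ MR)
    (J : X → StrongDual ℝ X)
    (hGateaux : ∀ x z : X,
      Filter.Tendsto (fun ε : ℝ => (‖x + ε • z‖ ^ 2 - ‖x‖ ^ 2) / (2 * ε))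
        (nhdsWithin 0 {(0:ℝ)}ᶜ) (nhds (J x z)))
    (Bstar : StrongDual ℝ X → U)
    (hBstar : ∀ (φ : StrongDual ℝ X) (u : U), ⟪Bstar φ, u⟫ = φ (B u))
    (lam : ℝ) (hlam : 0 < lam) (x₀ d : X)
    (μ : Measure ℝ) [IsFiniteMeasure μ]
    (haeIcc : ∀ᵐ s ∂μ, s ∈ Set.Icc (0:ℝ) τ)
    (ustar : Lp U 2 μ)
    (hmin : ∀ u : Lp U 2 μ,
      ‖R τ 0 x₀ + (∫ s, R τ s (B (ustar s)) ∂μ) - d‖ ^ 2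
        + lam * ∫ t, ‖ustar t‖ ^ 2 ∂μ ≤
      ‖R τ 0 x₀ + (∫ s, R τ s (B (u s)) ∂μ) - d‖ ^ 2
        + lam * ∫ t, ‖u t‖ ^ 2 ∂μ)
    (xstar : X)
    (hxstar : xstar = R τ 0 x₀ + ∫ s, R τ s (B (ustar s)) ∂μ) :
    ∀ᵐ t ∂μ, ustar t = (-(1 / lam)) • Bstar ((J (xstar - d)).comp (R τ t)) := by
  have hτ0 : (0:ℝ) ≤ τ := hτ.le
  -- continuity of s ↦ R τ s x on [0, τ]
  have hRc : ∀ x : X, ContinuousOn (fun s : ℝ => R τ s x) (Set.Icc 0 τ) := by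
    intro x
    have hmap : Set.MapsTo (fun s : ℝ => ((τ:ℝ), s)) (Set.Icc 0 τ)
        {p : ℝ × ℝ | 0 ≤ p.2 ∧ p.2 ≤ p.1 ∧ p.1 ≤ τ} := fun s hs => ⟨hs.1, hs.2, le_rfl⟩
    exact (hR_strong x).comp ((continuous_const.prodMk continuous_id).continuousOn) hmap
  have hMR0 : 0 ≤ MR := le_trans (norm_nonneg _) (hMR τ τ hτ0 le_rfl le_rfl)
  -- joint continuity on [0, τ] × X
  have hjoint : ContinuousOn (fun q : ℝ × X => R τ q.1 q.2)
      (Set.Icc 0 τ ×ˢ (Set.univ : Set X)) := by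
    rintro ⟨s₀, x₀'⟩ ⟨hs₀, -⟩
    have h1 : ContinuousWithinAt (fun q : ℝ × X => R τ q.1 x₀')
        (Set.Icc 0 τ ×ˢ (Set.univ : Set X)) (s₀, x₀') :=
      ((hRc x₀') s₀ hs₀).comp (g := fun s => R τ s x₀') (x := (s₀, x₀')) continuous_fst.continuousWithinAt (fun q hq => hq.1 : Set.MapsTo Prod.fst (Set.Icc 0 τ ×ˢ (Set.univ : Set X)) (Set.Icc 0 τ))
    have h2 : Filter.Tendsto (fun q : ℝ × X => R τ q.1 (q.2 - x₀'))
        (nhdsWithin (s₀, x₀') (Set.Icc 0 τ ×ˢ (Set.univ : Set X))) (nhds 0) := by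
      apply squeeze_zero_norm'
      · filter_upwards [eventually_mem_nhdsWithin] with q hq
        calc ‖R τ q.1 (q.2 - x₀')‖ ≤ ‖R τ q.1‖ * ‖q.2 - x₀'‖ := (R τ q.1).le_opNorm _
          _ ≤ MR * ‖q.2 - x₀'‖ := by
              gcongr
              exact hMR τ q.1 hq.1.1 hq.1.2 le_rfl
      · have hcont : Filter.Tendsto (fun q : ℝ × X => MR * ‖q.2 - x₀'‖)
            (nhds (s₀, x₀')) (nhds (MR * ‖x₀' - x₀'‖)) := by
          exact (continuous_const.mul ((continuous_snd.sub continuous_const).norm)).tendsto _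
        simpa using hcont.mono_left nhdsWithin_le_nhds
    have h3 := h2.add h1
    have heq : (fun q : ℝ × X => R τ q.1 (q.2 - x₀') + R τ q.1 x₀')
        = fun q : ℝ × X => R τ q.1 q.2 := by
      funext q; rw [map_sub]; abel
    rw [heq] at h3
    simpa [ContinuousWithinAt] using h3
  -- clamped globally continuous version
  have hclampc : Continuous (fun s : ℝ => max 0 (min s τ)) :=
    continuous_const.max (continuous_id.min continuous_const)
  have hclampmem : ∀ s : ℝ, max 0 (min s τ) ∈ Set.Icc (0:ℝ) τ :=
    fun s => ⟨le_max_left _ _, max_le hτ0 (min_le_right _ _)⟩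
  have hclampeq : ∀ s ∈ Set.Icc (0:ℝ) τ, max 0 (min s τ) = s := by
    intro s hs
    rw [min_eq_left hs.2, max_eq_right hs.1]
  have hΦc : Continuous (fun p : ℝ × X => R τ (max 0 (min p.1 τ)) p.2) := by
    have : (fun p : ℝ × X => R τ (max 0 (min p.1 τ)) p.2)
        = (fun q : ℝ × X => R τ q.1 q.2) ∘ (fun p : ℝ × X => (max 0 (min p.1 τ), p.2)) := rfl
    rw [this]
    exact hjoint.comp_continuous
      ((hclampc.comp continuous_fst).prodMk continuous_snd)
      (fun p => ⟨hclampmem p.1, Set.mem_univ _⟩)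
  -- measurability and integrability of s ↦ R τ s (B (v s))
  have hmeas : ∀ v : Lp U 2 μ, AEStronglyMeasurable (fun s => R τ s (B (v s))) μ := by
    intro v
    have h1 : AEStronglyMeasurable (fun s : ℝ => R τ (max 0 (min s τ)) (B (v s))) μ :=
      hΦc.comp_aestronglyMeasurable (aestronglyMeasurable_id.prodMk
        (B.continuous.comp_aestronglyMeasurable (Lp.aestronglyMeasurable v)))
    refine h1.congr ?_
    filter_upwards [haeIcc] with s hs
    rw [hclampeq s hs]
  have hint : ∀ v : Lp U 2 μ, Integrable (fun s => R τ s (B (v s))) μ := by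
    intro v
    have hv1 : Integrable (fun s => (v : ℝ → U) s) μ :=
      (Lp.memLp v).integrable one_le_two
    refine ((hv1.norm.const_mul (MR * ‖B‖)).mono' (hmeas v)) ?_
    filter_upwards [haeIcc] with s hs
    calc ‖R τ s (B (v s))‖ ≤ ‖R τ s‖ * ‖B (v s)‖ := (R τ s).le_opNorm _
      _ ≤ MR * (‖B‖ * ‖v s‖) := by
          gcongr
          · exact hMR τ s hs.1 hs.2 le_rfl
          · exact B.le_opNorm _
      _ = MR * ‖B‖ * ‖v s‖ := by ring
  -- integrability of scalar quantities
  have hVint : ∀ v w : Lp U 2 μ, Integrable (fun t => ⟪(v : ℝ → U) t, (w : ℝ → U) t⟫) μ :=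
    fun v w => L2.integrable_inner (𝕜 := ℝ) v w
  have hNint : ∀ v : Lp U 2 μ, Integrable (fun t => ‖(v : ℝ → U) t‖ ^ 2) μ := by
    intro v
    refine (hVint v v).congr (Filter.Eventually.of_forall fun t => ?_)
    simp [real_inner_self_eq_norm_sq]
  -- pointwise description of `ustar + ε • v`
  have hcoe : ∀ (ε : ℝ) (v : Lp U 2 μ), ((ustar + ε • v : Lp U 2 μ) : ℝ → U)
      =ᵐ[μ] fun t => ustar t + ε • (v : ℝ → U) t := by
    intro ε v
    filter_upwards [Lp.coeFn_add ustar (ε • v), Lp.coeFn_smul ε v] with t h1 h2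
    rw [h1, Pi.add_apply, h2, Pi.smul_apply]
  -- expansion of the two integrals
  have hLexp : ∀ (ε : ℝ) (v : Lp U 2 μ),
      (∫ s, R τ s (B ((ustar + ε • v : Lp U 2 μ) s)) ∂μ)
        = (∫ s, R τ s (B (ustar s)) ∂μ) + ε • ∫ s, R τ s (B ((v : ℝ → U) s)) ∂μ := by
    intro ε v
    have h1 : (fun s => R τ s (B ((ustar + ε • v : Lp U 2 μ) s))) =ᵐ[μ]
        fun s => R τ s (B (ustar s)) + ε • R τ s (B ((v : ℝ → U) s)) := by
      filter_upwards [hcoe ε v] with s hs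
      rw [hs]; simp
    have h2 : Integrable (fun s => ε • R τ s (B ((v : ℝ → U) s))) μ := (hint v).smul ε
    rw [integral_congr_ae h1, integral_add (hint ustar) h2, integral_smul]
  have hNexp : ∀ (ε : ℝ) (v : Lp U 2 μ),
      (∫ t, ‖(ustar + ε • v : Lp U 2 μ) t‖ ^ 2 ∂μ)
        = (∫ t, ‖ustar t‖ ^ 2 ∂μ) + ε * (2 * ∫ t, ⟪ustar t, (v : ℝ → U) t⟫ ∂μ)
          + ε ^ 2 * ∫ t, ‖(v : ℝ → U) t‖ ^ 2 ∂μ := by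
    intro ε v
    have h1 : (fun t => ‖(ustar + ε • v : Lp U 2 μ) t‖ ^ 2) =ᵐ[μ]
        fun t => ‖ustar t‖ ^ 2 + ε * (2 * ⟪ustar t, (v : ℝ → U) t⟫)
          + ε ^ 2 * ‖(v : ℝ → U) t‖ ^ 2 := by
      filter_upwards [hcoe ε v] with t ht
      rw [ht, norm_add_sq_real, real_inner_smul_right, norm_smul, Real.norm_eq_abs,
        mul_pow, sq_abs]
      ring
    have hA : Integrable (fun t => ‖ustar t‖ ^ 2) μ := hNint ustar
    have hB1 : Integrable (fun t => ε * (2 * ⟪ustar t, (v : ℝ → U) t⟫)) μ :=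
      ((hVint ustar v).const_mul 2).const_mul ε
    have hC : Integrable (fun t => ε ^ 2 * ‖(v : ℝ → U) t‖ ^ 2) μ := (hNint v).const_mul (ε ^ 2)
    have hAB : Integrable (fun t => ‖ustar t‖ ^ 2 + ε * (2 * ⟪ustar t, (v : ℝ → U) t⟫)) μ :=
      hA.add hB1
    rw [integral_congr_ae h1, integral_add hAB hC, integral_add hA hB1,
      integral_const_mul, integral_const_mul, integral_const_mul]
  -- the Euler–Lagrange / variational equation
  have hvar : ∀ v : Lp U 2 μ,
      (J (xstar - d)) (∫ s, R τ s (B ((v : ℝ → U) s)) ∂μ)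
        + lam * ∫ t, ⟪ustar t, (v : ℝ → U) t⟫ ∂μ = 0 := by
    intro v
    set c : X := ∫ s, R τ s (B ((v : ℝ → U) s)) ∂μ with hc
    set I1 : ℝ := ∫ t, ⟪ustar t, (v : ℝ → U) t⟫ ∂μ with hI1
    set I2 : ℝ := ∫ t, ‖(v : ℝ → U) t‖ ^ 2 ∂μ with hI2
    have hmin2 : ∀ ε : ℝ,
        0 ≤ (‖(xstar - d) + ε • c‖ ^ 2 - ‖xstar - d‖ ^ 2)
          + ε * (2 * lam * I1) + ε ^ 2 * (lam * I2) := by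
      intro ε
      have h := hmin (ustar + ε • v)
      rw [hLexp ε v, hNexp ε v] at h
      have e1 : R τ 0 x₀ + ((∫ s, R τ s (B (ustar s)) ∂μ) + ε • c) - d
          = (xstar - d) + ε • c := by rw [hxstar]; abel
      have e0 : R τ 0 x₀ + (∫ s, R τ s (B (ustar s)) ∂μ) - d = xstar - d := by
        rw [hxstar]
      rw [e1, e0] at h
      nlinarith [h]
    have hqG : ∀ ε : ℝ, ε ≠ 0 →
        (‖(xstar - d) + ε • c‖ ^ 2 - ‖xstar - d‖ ^ 2) / (2 * ε) + lam * I1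
            + ε * (lam * I2) / 2
          = ((‖(xstar - d) + ε • c‖ ^ 2 - ‖xstar - d‖ ^ 2)
              + ε * (2 * lam * I1) + ε ^ 2 * (lam * I2)) / (2 * ε) := by
      intro ε hε
      field_simp
    have hqten : Filter.Tendsto
        (fun ε : ℝ => (‖(xstar - d) + ε • c‖ ^ 2 - ‖xstar - d‖ ^ 2) / (2 * ε) + lam * I1
          + ε * (lam * I2) / 2)
        (nhdsWithin 0 {(0:ℝ)}ᶜ) (nhds ((J (xstar - d)) c + lam * I1)) := by
      have h1 := hGateaux (xstar - d) c
      have h2 : Filter.Tendsto (fun ε : ℝ => ε * (lam * I2) / 2) (nhds 0) (nhds 0) := by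
        have hcont : Continuous fun ε : ℝ => ε * (lam * I2) / 2 :=
          (continuous_id.mul continuous_const).div_const 2
        have := hcont.tendsto 0
        simpa using this
      have h3 := (h1.add (tendsto_const_nhds (x := lam * I1))).add
        (h2.mono_left nhdsWithin_le_nhds)
      simpa using h3
    have hge : 0 ≤ (J (xstar - d)) c + lam * I1 := by
      have hsub : Set.Ioi (0:ℝ) ⊆ {(0:ℝ)}ᶜ := fun x hx => ne_of_gt hx
      refine ge_of_tendsto (hqten.mono_left (nhdsWithin_mono 0 hsub)) ?_
      filter_upwards [self_mem_nhdsWithin] with ε hε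
      have hε' : (0:ℝ) < ε := hε
      rw [hqG ε (ne_of_gt hε')]
      exact div_nonneg (hmin2 ε) (by linarith)
    have hle : (J (xstar - d)) c + lam * I1 ≤ 0 := by
      have hsub : Set.Iio (0:ℝ) ⊆ {(0:ℝ)}ᶜ := fun x hx => ne_of_lt hx
      refine le_of_tendsto (hqten.mono_left (nhdsWithin_mono 0 hsub)) ?_
      filter_upwards [self_mem_nhdsWithin] with ε hε
      have hε' : ε < 0 := hε
      rw [hqG ε (ne_of_lt hε')]
      exact div_nonpos_of_nonneg_of_nonpos (hmin2 ε) (by linarith)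
    linarith
  -- integrability of the constant-direction vector field and scalar integrands
  have hvec : ∀ u : U, Integrable (fun s : ℝ => R τ s (B u)) μ := by
    intro u
    have hm : AEStronglyMeasurable (fun s : ℝ => R τ s (B u)) μ := by
      have h1 : Continuous (fun s : ℝ => R τ (max 0 (min s τ)) (B u)) :=
        hΦc.comp (continuous_id.prodMk continuous_const)
      refine h1.aestronglyMeasurable.congr ?_
      filter_upwards [haeIcc] with s hs
      rw [hclampeq s hs]
    refine (integrable_const (MR * ‖B u‖)).mono' hm ?_
    filter_upwards [haeIcc] with s hs
    calc ‖R τ s (B u)‖ ≤ ‖R τ s‖ * ‖B u‖ := (R τ s).le_opNorm _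
      _ ≤ MR * ‖B u‖ := by
          gcongr
          exact hMR τ s hs.1 hs.2 le_rfl
  have hint_g : ∀ u : U, Integrable (fun t : ℝ => (J (xstar - d)) (R τ t (B u))) μ :=
    fun u => (J (xstar - d)).integrable_comp (hvec u)
  have hint_u : ∀ u : U, Integrable (fun t => ⟪(ustar : ℝ → U) t, u⟫) μ :=
    fun u => ((Lp.memLp ustar).inner_const u).integrable one_le_two
  -- pointwise a.e. Euler-Lagrange equation in each fixed direction u
  have hptwise : ∀ u : U,
      (fun t => (J (xstar - d)) (R τ t (B u)) + lam * ⟪(ustar : ℝ → U) t, u⟫) =ᵐ[μ] 0 := by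
    intro u
    have hginteg : Integrable
        (fun t => (J (xstar - d)) (R τ t (B u)) + lam * ⟪(ustar : ℝ → U) t, u⟫) μ :=
      (hint_g u).add ((hint_u u).const_mul lam)
    refine hginteg.ae_eq_zero_of_forall_setIntegral_eq_zero ?_
    intro A hA hAfin
    have hvmem : MemLp (A.indicator (fun _ : ℝ => u)) 2 μ := (memLp_const u).indicator hA
    have hvcoe : (hvmem.toLp _ : ℝ → U) =ᵐ[μ] A.indicator (fun _ => u) := hvmem.coeFn_toLp
    set v : Lp U 2 μ := hvmem.toLp _ with hv
    have h1 : (∫ s, R τ s (B ((v : ℝ → U) s)) ∂μ) = ∫ s in A, R τ s (B u) ∂μ := by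
      rw [← integral_indicator hA]
      refine integral_congr_ae ?_
      filter_upwards [hvcoe] with s hs
      rw [hs]
      by_cases hsA : s ∈ A
      · simp [Set.indicator_of_mem hsA]
      · simp [Set.indicator_of_notMem hsA]
    have h2 : (∫ t, ⟪(ustar : ℝ → U) t, (v : ℝ → U) t⟫ ∂μ)
        = ∫ t in A, ⟪(ustar : ℝ → U) t, u⟫ ∂μ := by
      rw [← integral_indicator hA]
      refine integral_congr_ae ?_
      filter_upwards [hvcoe] with t htv
      rw [htv]
      by_cases htA : t ∈ A
      · simp [Set.indicator_of_mem htA]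
      · simp [Set.indicator_of_notMem htA]
    have h3 : (J (xstar - d)) (∫ s in A, R τ s (B u) ∂μ)
        = ∫ s in A, (J (xstar - d)) (R τ s (B u)) ∂μ :=
      (ContinuousLinearMap.integral_comp_comm _ ((hvec u).integrableOn)).symm
    have hton := hvar v
    rw [h1, h2, h3] at hton
    rw [integral_add ((hint_g u).integrableOn) (((hint_u u).const_mul lam).integrableOn),
      integral_const_mul]
    exact hton
  -- combine over a countable dense set of directions
  obtain ⟨Dset, hDc, hDd⟩ := TopologicalSpace.exists_countable_dense U
  have hae : ∀ᵐ t ∂μ, ∀ u ∈ Dset,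
      (J (xstar - d)) (R τ t (B u)) + lam * ⟪(ustar : ℝ → U) t, u⟫ = 0 := by
    rw [ae_ball_iff hDc]
    intro u hu
    filter_upwards [hptwise u] with t ht
    simpa using ht
  filter_upwards [hae] with t ht
  have hz : lam • (ustar : ℝ → U) t + Bstar ((J (xstar - d)).comp (R τ t)) = 0 := by
    have hcont : Continuous fun u : U =>
        ⟪lam • (ustar : ℝ → U) t + Bstar ((J (xstar - d)).comp (R τ t)), u⟫ :=
      continuous_const.inner continuous_id
    have hzero : Set.EqOn
        (fun u : U => ⟪lam • (ustar : ℝ → U) t + Bstar ((J (xstar - d)).comp (R τ t)), u⟫)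
        (fun _ : U => (0:ℝ)) Dset := by
      intro u hu
      have h1 := ht u hu
      have h2 : ⟪Bstar ((J (xstar - d)).comp (R τ t)), u⟫
          = (J (xstar - d)) (R τ t (B u)) := by
        rw [hBstar]; rfl
      show ⟪lam • (ustar : ℝ → U) t + Bstar ((J (xstar - d)).comp (R τ t)), u⟫ = 0
      rw [inner_add_left, real_inner_smul_left, h2]
      linarith
    have hfun := hcont.ext_on hDd continuous_const hzero
    have hself := congrFun hfun
      (lam • (ustar : ℝ → U) t + Bstar ((J (xstar - d)).comp (R τ t)))
    exact inner_self_eq_zero.mp hself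
  have hlamne : lam ≠ 0 := ne_of_gt hlam
  have h1 : lam • (ustar : ℝ → U) t = -Bstar ((J (xstar - d)).comp (R τ t)) := by
    rwa [add_eq_zero_iff_eq_neg] at hz
  calc (ustar : ℝ → U) t = (1/lam) • (lam • (ustar : ℝ → U) t) := by
        rw [smul_smul, one_div, inv_mul_cancel₀ hlamne, one_smul]
    _ = (1/lam) • (-Bstar ((J (xstar - d)).comp (R τ t))) := by rw [h1]
    _ = (-(1/lam)) • Bstar ((J (xstar - d)).comp (R τ t)) := by rw [smul_neg, neg_smul]


theorem stmt_6
    {X U : Type*} [NormedAddCommGroup X] [NormedSpace ℝ X] [CompleteSpace X]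
    [TopologicalSpace.SeparableSpace X]
    [StrictConvexSpace ℝ X] [StrictConvexSpace ℝ (StrongDual ℝ X)]
    [NormedAddCommGroup U] [InnerProductSpace ℝ U] [CompleteSpace U]
    [TopologicalSpace.SeparableSpace U]
    -- X is reflexive
    (hrefl : Function.Surjective (NormedSpace.inclusionInDoubleDual ℝ X))
    (τ : ℝ) (hτ : 0 < τ)
    (B : U →L[ℝ] X)
    (R : ℝ → ℝ → X →L[ℝ] X)
    -- strong continuity of (t,s) ↦ R(t,s)x on the triangle 0 ≤ s ≤ t ≤ τ
    (hR_strong : ∀ x : X, ContinuousOn (fun p : ℝ × ℝ => R p.1 p.2 x)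
      {p : ℝ × ℝ | 0 ≤ p.2 ∧ p.2 ≤ p.1 ∧ p.1 ≤ τ})
    -- uniform boundedness in operator norm
    (MR : ℝ) (hMR : ∀ t s : ℝ, 0 ≤ s → s ≤ t → t ≤ τ → ‖R t s‖ ≤ MR)
    -- J is a duality mapping of X
    (J : X → StrongDual ℝ X)
    (hJ_id : ∀ x : X, J x x = ‖x‖ ^ 2)
    (hJ_norm : ∀ x : X, ‖J x‖ = ‖x‖)
    -- Gateaux differentiability of the square of the norm with derivative J
    (hGateaux : ∀ x z : X,
      Filter.Tendsto (fun ε : ℝ => (‖x + ε • z‖ ^ 2 - ‖x‖ ^ 2) / (2 * ε))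
        (nhdsWithin 0 {(0:ℝ)}ᶜ) (nhds (J x z)))
    -- B* x* is the Riesz representative of u ↦ ⟨x*, Bu⟩
    (Bstar : StrongDual ℝ X → U)
    (hBstar : ∀ (φ : StrongDual ℝ X) (u : U), ⟪Bstar φ, u⟫ = φ (B u))
    (lam : ℝ) (hlam : 0 < lam) (x₀ d : X)
    -- u* minimizes the cost functional G_λ
    (ustar : Lp U 2 ((volume : Measure ℝ).restrict (Set.Icc 0 τ)))
    (hmin : ∀ u : Lp U 2 ((volume : Measure ℝ).restrict (Set.Icc 0 τ)),
      ‖R τ 0 x₀ +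
          (∫ s, R τ s (B (ustar s)) ∂((volume : Measure ℝ).restrict (Set.Icc 0 τ))) - d‖ ^ 2
        + lam * ∫ t, ‖ustar t‖ ^ 2 ∂((volume : Measure ℝ).restrict (Set.Icc 0 τ)) ≤
      ‖R τ 0 x₀ +
          (∫ s, R τ s (B (u s)) ∂((volume : Measure ℝ).restrict (Set.Icc 0 τ))) - d‖ ^ 2
        + lam * ∫ t, ‖u t‖ ^ 2 ∂((volume : Measure ℝ).restrict (Set.Icc 0 τ)))
    -- x*(τ) : the terminal state for the control u*
    (xstar : X)
    (hxstar : xstar = R τ 0 x₀ +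
      ∫ s, R τ s (B (ustar s)) ∂((volume : Measure ℝ).restrict (Set.Icc 0 τ))) :
    ∀ᵐ t ∂((volume : Measure ℝ).restrict (Set.Icc 0 τ)),
      ustar t = (-(1 / lam)) • Bstar ((J (xstar - d)).comp (R τ t)) := by
  have hfin : IsFiniteMeasure ((volume : Measure ℝ).restrict (Set.Icc 0 τ)) := by
    constructor
    rw [Measure.restrict_apply_univ, Real.volume_Icc]
    exact ENNReal.ofReal_lt_top
  exact stmt_6_aux τ hτ B R hR_strong MR hMR J hGateaux Bstar hBstar lam hlam x₀ d
    ((volume : Measure ℝ).restrict (Set.Icc 0 τ))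
    (ae_restrict_mem measurableSet_Icc) ustar hmin xstar hxstar
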